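/- Under the same hypotheses — V : (0,∞) → M₂(ℂ) continuous; u₁, u₂, ψ₀ twice differentiable invertible matrix solutions of −u_j'' + Vu_j = E_j u_j and −ψ₀'' + Vψ₀ = k²ψ₀; w_j = u_j'u_j⁻¹, w_k = ψ₀'ψ₀⁻¹; w₂−w₁ invertible everywhere; W₂ = (E₁−E₂)(w₂−w₁)⁻¹; ũ₂ = (w₁−w₂)u₂; w̃₂ = ũ₂'ũ₂⁻¹ — the transformed solution also admits the symmetric form: (w̃₂ − ∂_r)((w₁ − ∂_r)ψ₀)(r) = [(−k² + (E₁+E₂)/2)·I + W₂(r)((w₁(r)+w₂(r))/2 − w_k(r))] ψ₀(r) for all r. -/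

import Mathlib

open Matrix Set

private lemma hdMul {A B : ℝ → Matrix (Fin 2) (Fin 2) ℂ} {A' B' : Matrix (Fin 2) (Fin 2) ℂ} {r : ℝ}
    (hA : ∀ i j, HasDerivAt (fun t => A t i j) (A' i j) r)
    (hB : ∀ i j, HasDerivAt (fun t => B t i j) (B' i j) r) :
    ∀ i j, HasDerivAt (fun t => (A t * B t) i j) ((A' * B r + A r * B') i j) r := by
  intro i j
  have h := HasDerivAt.fun_sum (u := Finset.univ) (A := fun l t => A t i l * B t l j)
      (A' := fun l => A' i l * B r l j + A r i l * B' l j)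
      (fun l _ => (hA i l).mul (hB l j))
  convert h using 1
  · rfl
  simp [Matrix.mul_apply, Matrix.add_apply, Finset.sum_add_distrib]
  simp [Matrix.mul_apply, Matrix.add_apply, Finset.sum_add_distrib]

private lemma hdInv {A : ℝ → Matrix (Fin 2) (Fin 2) ℂ} {A' : Matrix (Fin 2) (Fin 2) ℂ} {r : ℝ}
    (hA : ∀ i j, HasDerivAt (fun t => A t i j) (A' i j) r)
    (hU : ∀ᶠ t in nhds r, IsUnit (A t)) :
    ∀ i j, HasDerivAt (fun t => (A t)⁻¹ i j) ((-((A r)⁻¹ * A' * (A r)⁻¹)) i j) r := by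
  have hUr : IsUnit (A r) := hU.self_of_nhds
  have hdet : IsUnit (A r).det := (Matrix.isUnit_iff_isUnit_det _).mp hUr
  have hdetne : (A r).det ≠ 0 := hdet.ne_zero
  have hdetd : HasDerivAt (fun t => (A t).det)
      (A' 0 0 * A r 1 1 + A r 0 0 * A' 1 1 - (A' 0 1 * A r 1 0 + A r 0 1 * A' 1 0)) r := by
    have h := ((hA 0 0).fun_mul (hA 1 1)).fun_sub ((hA 0 1).fun_mul (hA 1 0))
    convert h using 1
    · rfl
    funext t; simp [Matrix.det_fin_two]
  have hdiff : ∀ i j, DifferentiableAt ℝ (fun t => (A t)⁻¹ i j) r := by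
    intro i j
    have heq : (fun t => (A t)⁻¹ i j) = fun t => ((A t).det)⁻¹ * (A t).adjugate i j := by
      funext t
      rw [Matrix.inv_def, Ring.inverse_eq_inv']
      simp [Matrix.smul_apply, smul_eq_mul]
    rw [heq]
    apply DifferentiableAt.mul
    · exact hdetd.differentiableAt.inv hdetne
    · fin_cases i <;> fin_cases j <;>
        simp only [Matrix.adjugate_fin_two, Matrix.cons_val', Matrix.cons_val_zero,
          Matrix.cons_val_one, Matrix.head_cons, Matrix.empty_val',
          Matrix.cons_val_fin_one, Matrix.head_fin_const, Fin.isValue] <;>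
        first
        | exact (hA 1 1).differentiableAt
        | exact ((hA 0 1).differentiableAt).neg
        | exact ((hA 1 0).differentiableAt).neg
        | exact (hA 0 0).differentiableAt
  set B' : Matrix (Fin 2) (Fin 2) ℂ :=
    Matrix.of fun i j => deriv (fun t => (A t)⁻¹ i j) r with hB'def
  have hB' : ∀ i j, HasDerivAt (fun t => (A t)⁻¹ i j) (B' i j) r :=
    fun i j => (hdiff i j).hasDerivAt
  have hprod := hdMul hA hB'
  have hone : ∀ i j, HasDerivAt (fun t => (A t * (A t)⁻¹) i j) 0 r := by
    intro i j
    have heq : (fun t => (A t * (A t)⁻¹) i j) =ᶠ[nhds r] fun _ => (1 : Matrix (Fin 2) (Fin 2) ℂ) i j := by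
      filter_upwards [hU] with t ht
      rw [Matrix.mul_nonsing_inv _ ((Matrix.isUnit_iff_isUnit_det _).mp ht)]
    exact (hasDerivAt_const r _).congr_of_eventuallyEq heq
  have hzero : A' * (A r)⁻¹ + A r * B' = 0 := by
    ext i j
    simpa using (hprod i j).unique (hone i j)
  have h1 : A r * B' = -(A' * (A r)⁻¹) := eq_neg_of_add_eq_zero_right hzero
  have hB'eq : B' = -((A r)⁻¹ * A' * (A r)⁻¹) := by
    calc B' = ((A r)⁻¹ * A r) * B' := by rw [Matrix.nonsing_inv_mul _ hdet, one_mul]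
      _ = (A r)⁻¹ * (A r * B') := by rw [mul_assoc]
      _ = (A r)⁻¹ * -(A' * (A r)⁻¹) := by rw [h1]
      _ = -((A r)⁻¹ * A' * (A r)⁻¹) := by rw [mul_neg, mul_assoc]
  intro i j
  exact hB'eq ▸ hB' i j

private lemma hdW {V u u' u'' : ℝ → Matrix (Fin 2) (Fin 2) ℂ} {E : ℂ} {r : ℝ}
    (hu : ∀ x ∈ Ioi (0:ℝ), ∀ i j, HasDerivAt (fun t => u t i j) (u' x i j) x)
    (hu' : ∀ x ∈ Ioi (0:ℝ), ∀ i j, HasDerivAt (fun t => u' t i j) (u'' x i j) x)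
    (heq : ∀ x ∈ Ioi (0:ℝ), -u'' x + V x * u x = E • u x)
    (hinv : ∀ x ∈ Ioi (0:ℝ), IsUnit (u x)) (hr : r ∈ Ioi (0:ℝ)) :
    ∀ i j, HasDerivAt (fun t => (u' t * (u t)⁻¹) i j)
      ((V r - E • 1 - (u' r * (u r)⁻¹) * (u' r * (u r)⁻¹)) i j) r := by
  have hU : ∀ᶠ t in nhds r, IsUnit (u t) := by
    filter_upwards [isOpen_Ioi.mem_nhds hr] with t ht using hinv t ht
  have hI := hdInv (hu r hr) hU
  have hmi : u r * (u r)⁻¹ = 1 :=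
    Matrix.mul_nonsing_inv _ ((Matrix.isUnit_iff_isUnit_det _).mp (hinv r hr))
  have hu''v : u'' r = V r * u r - E • u r := by
    have h := heq r hr
    have : u'' r = V r * u r - (-u'' r + V r * u r) := by abel
    rw [this, h]
  have hval : u'' r * (u r)⁻¹ + u' r * (-((u r)⁻¹ * u' r * (u r)⁻¹))
      = V r - E • 1 - (u' r * (u r)⁻¹) * (u' r * (u r)⁻¹) := by
    have h1 : u'' r * (u r)⁻¹ = V r - E • 1 := by
      rw [hu''v, sub_mul, mul_assoc, hmi, mul_one, smul_mul_assoc, hmi]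
    have h2 : u' r * -((u r)⁻¹ * u' r * (u r)⁻¹)
        = -((u' r * (u r)⁻¹) * (u' r * (u r)⁻¹)) := by
      rw [mul_neg]
      congr 1
      noncomm_ring
    rw [h1, h2]; abel
  intro i j
  have := hdMul (hu' r hr) hI i j
  rwa [hval] at this

/-- Action of the two-fold SUSY transformation operator `L = (w̃₂ - ∂)(w₁ - ∂)` on a
matrix solution `ψ₀` of the initial Schrödinger equation:
`Lψ₀ = [(-k² + (E₁+E₂)/2)·1 + W₂((w₁+w₂)/2 - w_k)]ψ₀`, with `W₂ = (E₁-E₂)(w₂-w₁)⁻¹`. -/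
theorem twofold_SUSY_action_symmetric_form
    (V u₁ u₁' u₁'' u₂ u₂' u₂'' ψ₀ ψ₀' ψ₀'' : ℝ → Matrix (Fin 2) (Fin 2) ℂ)
    (E₁ E₂ k2 : ℂ)
    (hV : ContinuousOn V (Ioi 0))
    (hu₁ : ∀ r ∈ Ioi (0:ℝ), ∀ i j, HasDerivAt (fun t => u₁ t i j) (u₁' r i j) r)
    (hu₁' : ∀ r ∈ Ioi (0:ℝ), ∀ i j, HasDerivAt (fun t => u₁' t i j) (u₁'' r i j) r)
    (hu₂ : ∀ r ∈ Ioi (0:ℝ), ∀ i j, HasDerivAt (fun t => u₂ t i j) (u₂' r i j) r)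
    (hu₂' : ∀ r ∈ Ioi (0:ℝ), ∀ i j, HasDerivAt (fun t => u₂' t i j) (u₂'' r i j) r)
    (hψ₀ : ∀ r ∈ Ioi (0:ℝ), ∀ i j, HasDerivAt (fun t => ψ₀ t i j) (ψ₀' r i j) r)
    (hψ₀' : ∀ r ∈ Ioi (0:ℝ), ∀ i j, HasDerivAt (fun t => ψ₀' t i j) (ψ₀'' r i j) r)
    (heq₁ : ∀ r ∈ Ioi (0:ℝ), -u₁'' r + V r * u₁ r = E₁ • u₁ r)
    (heq₂ : ∀ r ∈ Ioi (0:ℝ), -u₂'' r + V r * u₂ r = E₂ • u₂ r)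
    (heqψ : ∀ r ∈ Ioi (0:ℝ), -ψ₀'' r + V r * ψ₀ r = k2 • ψ₀ r)
    (hinv₁ : ∀ r ∈ Ioi (0:ℝ), IsUnit (u₁ r))
    (hinv₂ : ∀ r ∈ Ioi (0:ℝ), IsUnit (u₂ r))
    (hinvψ : ∀ r ∈ Ioi (0:ℝ), IsUnit (ψ₀ r))
    (w₁ w₂ wk : ℝ → Matrix (Fin 2) (Fin 2) ℂ)
    (hw₁ : ∀ r, w₁ r = u₁' r * (u₁ r)⁻¹)
    (hw₂ : ∀ r, w₂ r = u₂' r * (u₂ r)⁻¹)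
    (hwk : ∀ r, wk r = ψ₀' r * (ψ₀ r)⁻¹)
    (hinvw : ∀ r ∈ Ioi (0:ℝ), IsUnit (w₂ r - w₁ r))
    (W₂ : ℝ → Matrix (Fin 2) (Fin 2) ℂ)
    (hW₂ : ∀ r, W₂ r = (E₁ - E₂) • (w₂ r - w₁ r)⁻¹)
    (tu₂ tu₂' : ℝ → Matrix (Fin 2) (Fin 2) ℂ)
    (htu₂ : ∀ r, tu₂ r = (w₁ r - w₂ r) * u₂ r)
    (htu₂' : ∀ r ∈ Ioi (0:ℝ), ∀ i j, HasDerivAt (fun t => tu₂ t i j) (tu₂' r i j) r)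
    (tw₂ : ℝ → Matrix (Fin 2) (Fin 2) ℂ)
    (htw₂ : ∀ r, tw₂ r = tu₂' r * (tu₂ r)⁻¹)
    (g g' : ℝ → Matrix (Fin 2) (Fin 2) ℂ)
    (hg : ∀ r, g r = w₁ r * ψ₀ r - ψ₀' r)
    (hg' : ∀ r ∈ Ioi (0:ℝ), ∀ i j, HasDerivAt (fun t => g t i j) (g' r i j) r) :
    ∀ r ∈ Ioi (0:ℝ),
      tw₂ r * g r - g' r
        = ((-k2 + (E₁ + E₂) / 2) • (1 : Matrix (Fin 2) (Fin 2) ℂ)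
            + W₂ r * ((2:ℂ)⁻¹ • (w₁ r + w₂ r) - wk r)) * ψ₀ r := by

  intro r hr
  have hdψ : IsUnit (ψ₀ r).det := (Matrix.isUnit_iff_isUnit_det _).mp (hinvψ r hr)
  have hdu₂ : IsUnit (u₂ r).det := (Matrix.isUnit_iff_isUnit_det _).mp (hinv₂ r hr)
  have hΔu : IsUnit (w₁ r - w₂ r) := by
    have := (hinvw r hr).neg; rwa [neg_sub] at this
  have hΔdet : IsUnit (w₁ r - w₂ r).det := (Matrix.isUnit_iff_isUnit_det _).mp hΔu
  have hΔ : (w₁ r - w₂ r) * (w₁ r - w₂ r)⁻¹ = 1 := Matrix.mul_nonsing_inv _ hΔdet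
  have hΔ' : (w₁ r - w₂ r)⁻¹ * (w₁ r - w₂ r) = 1 := Matrix.nonsing_inv_mul _ hΔdet
  have hu₂i : u₂ r * (u₂ r)⁻¹ = 1 := Matrix.mul_nonsing_inv _ hdu₂
  -- superpotential derivatives
  have hd₁ : ∀ i j, HasDerivAt (fun t => (u₁' t * (u₁ t)⁻¹) i j)
      ((V r - E₁ • 1 - w₁ r * w₁ r) i j) r := by
    have h := hdW hu₁ hu₁' heq₁ hinv₁ hr
    rwa [← hw₁ r] at h
  have hd₂ : ∀ i j, HasDerivAt (fun t => (u₂' t * (u₂ t)⁻¹) i j)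
      ((V r - E₂ • 1 - w₂ r * w₂ r) i j) r := by
    have h := hdW hu₂ hu₂' heq₂ hinv₂ hr
    rwa [← hw₂ r] at h
  -- value of g'
  have hg'val : g' r = (V r - E₁ • 1 - w₁ r * w₁ r) * ψ₀ r + w₁ r * ψ₀' r - ψ₀'' r := by
    have key : ∀ i j, HasDerivAt (fun t => g t i j)
        (((V r - E₁ • 1 - w₁ r * w₁ r) * ψ₀ r + w₁ r * ψ₀' r - ψ₀'' r) i j) r := by
      intro i j
      have hm := hdMul hd₁ (hψ₀ r hr) i j
      rw [← hw₁ r] at hm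
      have hs := hm.fun_sub (hψ₀' r hr i j)
      have hfun : (fun t => g t i j)
          = fun t => (u₁' t * (u₁ t)⁻¹ * ψ₀ t) i j - ψ₀' t i j := by
        funext t; rw [hg t, hw₁ t, Matrix.sub_apply]
      rw [hfun]
      convert hs using 1
      · rfl
      · rfl
    ext i j
    exact (hg' r hr i j).unique (key i j)
  -- value of tu₂'
  have htu₂'val : tu₂' r
      = ((V r - E₁ • 1 - w₁ r * w₁ r) - (V r - E₂ • 1 - w₂ r * w₂ r)) * u₂ r
        + (w₁ r - w₂ r) * u₂' r := by
    have hdΔ : ∀ i j, HasDerivAt (fun t => (u₁' t * (u₁ t)⁻¹ - u₂' t * (u₂ t)⁻¹) i j)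
        (((V r - E₁ • 1 - w₁ r * w₁ r) - (V r - E₂ • 1 - w₂ r * w₂ r)) i j) r := by
      intro i j
      have := (hd₁ i j).fun_sub (hd₂ i j)
      simpa [Matrix.sub_apply] using this
    have key : ∀ i j, HasDerivAt (fun t => tu₂ t i j)
        ((((V r - E₁ • 1 - w₁ r * w₁ r) - (V r - E₂ • 1 - w₂ r * w₂ r)) * u₂ r
          + (w₁ r - w₂ r) * u₂' r) i j) r := by
      intro i j
      have hm := hdMul hdΔ (hu₂ r hr) i j
      rw [← hw₁ r, ← hw₂ r] at hm
      have hfun : (fun t => tu₂ t i j)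
          = fun t => ((u₁' t * (u₁ t)⁻¹ - u₂' t * (u₂ t)⁻¹) * u₂ t) i j := by
        funext t; rw [htu₂ t, hw₁ t, hw₂ t]
      rw [hfun]
      exact hm
    ext i j
    exact (htu₂' r hr i j).unique (key i j)
  -- W₂ in terms of (w₁ - w₂)⁻¹
  have hW : W₂ r = (E₂ - E₁) • (w₁ r - w₂ r)⁻¹ := by
    have hni : (w₂ r - w₁ r)⁻¹ = -(w₁ r - w₂ r)⁻¹ := by
      apply Matrix.inv_eq_right_inv
      rw [mul_neg, ← neg_mul, neg_sub, hΔ]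
    rw [hW₂ r, hni, smul_neg, ← neg_smul, neg_sub]
  -- value of tw₂
  have htw₂val : tw₂ r = W₂ r - w₁ r := by
    have hinvtu : (tu₂ r)⁻¹ = (u₂ r)⁻¹ * (w₁ r - w₂ r)⁻¹ := by
      rw [htu₂ r, Matrix.mul_inv_rev]
    rw [htw₂ r, htu₂'val, hinvtu]
    have hstep : ∀ X : Matrix (Fin 2) (Fin 2) ℂ,
        (X * u₂ r) * ((u₂ r)⁻¹ * (w₁ r - w₂ r)⁻¹) = X * (w₁ r - w₂ r)⁻¹ := by
      intro X
      rw [mul_assoc, ← mul_assoc (u₂ r), hu₂i, one_mul]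
    have hw₂u : u₂' r * (u₂ r)⁻¹ = w₂ r := (hw₂ r).symm
    have hstep' : ((w₁ r - w₂ r) * u₂' r) * ((u₂ r)⁻¹ * (w₁ r - w₂ r)⁻¹)
        = ((w₁ r - w₂ r) * w₂ r) * (w₁ r - w₂ r)⁻¹ := by
      rw [mul_assoc, ← mul_assoc (u₂' r), hw₂u, ← mul_assoc]
    rw [add_mul, hstep, hstep', ← add_mul]
    have hcomb : (V r - E₁ • 1 - w₁ r * w₁ r) - (V r - E₂ • 1 - w₂ r * w₂ r)
        + (w₁ r - w₂ r) * w₂ r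
        = (E₂ - E₁) • (1 : Matrix (Fin 2) (Fin 2) ℂ) - w₁ r * (w₁ r - w₂ r) := by
      simp only [sub_mul, mul_sub, sub_smul]
      abel
    rw [hcomb, sub_mul, smul_mul_assoc, one_mul, mul_assoc, hΔ, mul_one, hW]
  -- wk applied to ψ₀
  have hwkψ : wk r * ψ₀ r = ψ₀' r := by
    rw [hwk r, mul_assoc, Matrix.nonsing_inv_mul _ hdψ, mul_one]
  -- relation W₂ w₂ ψ₀ = W₂ w₁ ψ₀ + (E₁-E₂) ψ₀
  have h9ψ : W₂ r * (w₂ r * ψ₀ r) = W₂ r * (w₁ r * ψ₀ r) + (E₁ - E₂) • ψ₀ r := by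
    have hW₂Δ : W₂ r * (w₁ r - w₂ r) = (E₂ - E₁) • 1 := by
      rw [hW, smul_mul_assoc, hΔ']
    have h := congrArg (fun X => X * ψ₀ r) hW₂Δ
    rw [mul_sub, sub_mul, mul_assoc, mul_assoc, smul_mul_assoc, one_mul] at h
    have h2 := sub_eq_iff_eq_add.mp h
    rw [h2, show (E₁ - E₂) = -(E₂ - E₁) from by ring, neg_smul]
    abel
  -- Schrödinger for ψ₀
  have hψ''v : ψ₀'' r = V r * ψ₀ r - k2 • ψ₀ r := by
    have h := heqψ r hr
    have h2 : ψ₀'' r = V r * ψ₀ r - (-ψ₀'' r + V r * ψ₀ r) := by abel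
    rw [h2, h]
  -- final algebra
  rw [hg r, htw₂val, hg'val, hψ''v]
  simp only [sub_mul, mul_sub, add_mul, mul_add, smul_mul_assoc, mul_smul_comm,
    mul_assoc, one_mul, mul_one, smul_add, smul_sub]
  rw [hwkψ, h9ψ]
  module
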